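/- Monotonicity of minimizers: let V be submodular on a finite set Y and p : Y → ℝ₊. For λ ≥ 0, let B_λ be the (inclusion-wise largest) minimizer of B ↦ V(B) + λ p(Bᶜ) over subsets of Y, where p(A) = ∑_{y∈A} p(y). Then λ ≤ λ' implies B_λ ⊆ B_{λ'}. -/
import Mathlib


open Finset

/-- Monotonicity of minimizers: for `V` submodular and `p ≥ 0`, if `B` (resp. `B'`)
is the inclusion-wise largest minimizer of `C ↦ V C + λ p(Cᶜ)` for `λ` (resp. `λ'`),
and `λ ≤ λ'`, then `B ⊆ B'`. -/
theorem minimizers_monotone (Y : Type*) [Fintype Y] [DecidableEq Y]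
    (V : Finset Y → ℝ)
    (hsub : ∀ A B : Finset Y, V (A ∩ B) + V (A ∪ B) ≤ V A + V B)
    (p : Y → ℝ) (hp : ∀ y, 0 ≤ p y)
    (lam lam' : ℝ) (hlam : 0 ≤ lam) (hlam' : lam ≤ lam')
    (B B' : Finset Y)
    (hBmin : ∀ C : Finset Y, V B + lam * (∑ y ∈ Bᶜ, p y) ≤ V C + lam * (∑ y ∈ Cᶜ, p y))
    (hBmax : ∀ C : Finset Y,
      (∀ D : Finset Y, V C + lam * (∑ y ∈ Cᶜ, p y) ≤ V D + lam * (∑ y ∈ Dᶜ, p y)) → C ⊆ B)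
    (hB'min : ∀ C : Finset Y,
      V B' + lam' * (∑ y ∈ B'ᶜ, p y) ≤ V C + lam' * (∑ y ∈ Cᶜ, p y))
    (hB'max : ∀ C : Finset Y,
      (∀ D : Finset Y, V C + lam' * (∑ y ∈ Cᶜ, p y) ≤ V D + lam' * (∑ y ∈ Dᶜ, p y)) → C ⊆ B') :
    B ⊆ B' := by
  -- abbreviations for the p-sums
  set sB := ∑ y ∈ Bᶜ, p y with hsB
  set sB' := ∑ y ∈ B'ᶜ, p y with hsB'
  set sI := ∑ y ∈ (B ∩ B')ᶜ, p y with hsI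
  set sU := ∑ y ∈ (B ∪ B')ᶜ, p y with hsU
  -- sum identity: sI + sU = sB + sB'
  have hsum : sI + sU = sB + sB' := by
    rw [hsI, hsU, hsB, hsB', Finset.compl_inter, Finset.compl_union]
    exact Finset.sum_union_inter
  -- (B ∪ B')ᶜ ⊆ B'ᶜ so sU ≤ sB'
  have hUle : sU ≤ sB' := by
    apply Finset.sum_le_sum_of_subset_of_nonneg
    · exact Finset.compl_subset_compl.mpr Finset.subset_union_right
    · intro y _ _; exact hp y
  -- from minimality of B at λ, applied to B ∩ B'
  have h1 : V B + lam * sB ≤ V (B ∩ B') + lam * sI := hBmin (B ∩ B')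
  -- submodularity
  have h2 : V (B ∩ B') + V (B ∪ B') ≤ V B + V B' := hsub B B'
  -- key: V (B ∪ B') - V B' ≤ λ (sB' - sU) ≤ λ' (sB' - sU)
  have hkey : V (B ∪ B') + lam' * sU ≤ V B' + lam' * sB' := by
    have h3 : lam * (sB' - sU) ≤ lam' * (sB' - sU) := by
      apply mul_le_mul_of_nonneg_right hlam'
      linarith
    nlinarith [h1, h2, h3, hsum]
  -- hence B ∪ B' is a minimizer at λ'
  have hmin : ∀ D : Finset Y, V (B ∪ B') + lam' * sU ≤ V D + lam' * (∑ y ∈ Dᶜ, p y) := by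
    intro D
    exact le_trans hkey (hB'min D)
  have := hB'max (B ∪ B') hmin
  exact fun y hy => this (Finset.mem_union_left _ hy)
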